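/- Let X be a real normed vector space, E : X → ℝ continuous, u₀, u₁ ∈ X, and r > 0 such that inf_{‖u-u₀‖=r} E(u) ≥ E(u₀), ‖u₁ - u₀‖ > r, and E(u₁) ≤ E(u₀). Let Γ be the set of continuous paths g : [0,1] → X with g(0) = u₀ and g(1) = u₁, and let c = inf_{g ∈ Γ} sup_{t ∈ [0,1]} E(g(t)). Then c ≥ E(u₀), and there exists a closed set F ⊆ X such that u₀ and u₁ lie in two distinct connected components of the complement of F ∩ {u ∈ X : E(u) ≥ c} (i.e., F ∩ {E ≥ c} separates u₀ and u₁). -/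

import Mathlib

open Set

/-- Under the (possibly degenerate) mountain-pass geometry
`inf_{‖u-u₀‖=r} E(u) ≥ E(u₀)`, `‖u₁-u₀‖ > r`, `E(u₁) ≤ E(u₀)`, the mountain-pass level
`c` satisfies `c ≥ E(u₀)`, and there is a closed set `F` such that `F ∩ {E ≥ c}`
separates `u₀` and `u₁`: they lie in two distinct connected components of the
complement of `F ∩ {E ≥ c}`. -/
theorem stmt_4 {X : Type*} [NormedAddCommGroup X] [NormedSpace ℝ X]
    (E : X → ℝ) (hE : Continuous E) (u₀ u₁ : X) (r : ℝ) (hr : 0 < r)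
    (hmountain : ∀ u : X, ‖u - u₀‖ = r → E u₀ ≤ E u)
    (hdist : r < ‖u₁ - u₀‖) (h01 : E u₁ ≤ E u₀)
    (c : ℝ)
    (hc : c = sInf { y : ℝ | ∃ g : ℝ → X, ContinuousOn g (Set.Icc 0 1) ∧
        g 0 = u₀ ∧ g 1 = u₁ ∧ y = sSup ((fun t => E (g t)) '' Set.Icc 0 1) }) :
    E u₀ ≤ c ∧
      ∃ F : Set X, IsClosed F ∧
        u₀ ∈ (F ∩ {u : X | c ≤ E u})ᶜ ∧
        u₁ ∈ (F ∩ {u : X | c ≤ E u})ᶜ ∧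
        connectedComponentIn (F ∩ {u : X | c ≤ E u})ᶜ u₀ ≠
          connectedComponentIn (F ∩ {u : X | c ≤ E u})ᶜ u₁ := by
  set S : Set ℝ := { y : ℝ | ∃ g : ℝ → X, ContinuousOn g (Set.Icc 0 1) ∧
      g 0 = u₀ ∧ g 1 = u₁ ∧ y = sSup ((fun t => E (g t)) '' Set.Icc 0 1) } with hS
  -- S is nonempty: the straight segment
  have hSne : S.Nonempty := by
    refine ⟨_, ⟨fun t => u₀ + t • (u₁ - u₀), ?_, by simp, by simp, rfl⟩⟩
    exact (continuous_const.add (continuous_id.smul continuous_const)).continuousOn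
  -- every element of S is ≥ E u₀
  have hlb : ∀ y ∈ S, E u₀ ≤ y := by
    rintro y ⟨g, hg, hg0, hg1, rfl⟩
    have hfc : ContinuousOn (fun t => ‖g t - u₀‖) (Icc (0:ℝ) 1) :=
      (hg.sub continuousOn_const).norm
    have hiv : r ∈ (fun t => ‖g t - u₀‖) '' Icc (0:ℝ) 1 := by
      apply intermediate_value_Icc zero_le_one hfc
      constructor
      · simp [hg0, hr.le]
      · simp [hg1, hdist.le]
    obtain ⟨t₀, ht₀, htr⟩ := hiv
    have hbdd : BddAbove ((fun t => E (g t)) '' Icc (0:ℝ) 1) :=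
      (isCompact_Icc.image_of_continuousOn (hE.comp_continuousOn hg)).bddAbove
    calc E u₀ ≤ E (g t₀) := hmountain _ htr
    _ ≤ sSup ((fun t => E (g t)) '' Icc (0:ℝ) 1) := le_csSup hbdd ⟨t₀, ht₀, rfl⟩
  have hEc : E u₀ ≤ c := hc ▸ le_csInf hSne hlb
  refine ⟨hEc, ?_⟩
  rcases eq_or_lt_of_le hEc with heq | hlt
  · -- degenerate case: c = E u₀, use the sphere
    refine ⟨{u : X | ‖u - u₀‖ = r}, ?_, ?_, ?_, ?_⟩
    · exact isClosed_eq ((continuous_id.sub continuous_const).norm) continuous_const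
    · intro h; have := h.1; simp at this; exact hr.ne' this.symm
    · intro h; exact (ne_of_gt hdist) h.1
    · intro hcomp
      set A : Set X := ({u : X | ‖u - u₀‖ = r} ∩ {u : X | c ≤ E u})ᶜ with hA
      have hu₁A : u₁ ∈ A := by
        intro h; exact (ne_of_gt hdist) h.1
      have hu₁mem : u₁ ∈ connectedComponentIn A u₀ := by
        rw [hcomp]; exact mem_connectedComponentIn hu₁A
      have hu₀mem : u₀ ∈ connectedComponentIn A u₀ := by
        apply mem_connectedComponentIn
        intro h; have := h.1; simp at this; exact hr.ne' this.symm
      have hconn : IsPreconnected (connectedComponentIn A u₀) :=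
        isPreconnected_connectedComponentIn
      have hsub : connectedComponentIn A u₀ ⊆ A := connectedComponentIn_subset _ _
      have hiv : r ∈ (fun u => ‖u - u₀‖) '' connectedComponentIn A u₀ := by
        apply hconn.intermediate_value hu₀mem hu₁mem
          ((continuous_id.sub continuous_const).norm.continuousOn)
        constructor
        · simp [hr.le]
        · exact hdist.le
      obtain ⟨u, hu, hur⟩ := hiv
      exact hsub hu ⟨hur, heq ▸ hmountain u hur⟩
  · -- nondegenerate case: c > E u₀, use F = univ
    refine ⟨univ, isClosed_univ, ?_, ?_, ?_⟩
    · intro h; exact absurd h.2 (not_le.mpr hlt)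
    · intro h; exact absurd h.2 (not_le.mpr (lt_of_le_of_lt h01 hlt))
    · intro hcomp
      set U : Set X := (univ ∩ {u : X | c ≤ E u})ᶜ with hU
      have hUopen : IsOpen U := by
        rw [hU, univ_inter]
        have : {u : X | c ≤ E u}ᶜ = E ⁻¹' (Iio c) := by
          ext u; simp [not_le]
        rw [this]
        exact isOpen_Iio.preimage hE
      have hu₀U : u₀ ∈ U := fun h => absurd h.2 (not_le.mpr hlt)
      have hu₁mem : u₁ ∈ connectedComponentIn U u₀ := by
        rw [hcomp]
        exact mem_connectedComponentIn fun h =>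
          absurd h.2 (not_le.mpr (lt_of_le_of_lt h01 hlt))
      -- the connected component is open and connected, hence path connected
      have hopen : IsOpen (connectedComponentIn U u₀) := hUopen.connectedComponentIn
      have hconn : IsConnected (connectedComponentIn U u₀) :=
        (isConnected_connectedComponentIn_iff).mpr hu₀U
      have hpc : IsPathConnected (connectedComponentIn U u₀) :=
        hopen.isConnected_iff_isPathConnected.mp hconn
      obtain ⟨γ, hγ⟩ := hpc.joinedIn u₀ (mem_connectedComponentIn hu₀U) u₁ hu₁mem
      -- build a path in S from γ
      have hmemU : ∀ t : unitInterval, (γ t) ∈ U :=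
        fun t => connectedComponentIn_subset _ _ (hγ t)
      have hy : sSup ((fun t => E (γ.extend t)) '' Icc (0:ℝ) 1) ∈ S := by
        exact ⟨γ.extend, γ.continuous_extend.continuousOn, by simp, by simp, rfl⟩
      have hcy : c ≤ sSup ((fun t => E (γ.extend t)) '' Icc (0:ℝ) 1) :=
        hc ▸ csInf_le ⟨E u₀, fun y hy => hlb y hy⟩ hy
      -- but the sup is attained at some point where E < c
      have hcpt : IsCompact ((fun t => E (γ.extend t)) '' Icc (0:ℝ) 1) :=
        isCompact_Icc.image (hE.comp γ.continuous_extend)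
      have hne : ((fun t => E (γ.extend t)) '' Icc (0:ℝ) 1).Nonempty :=
        (nonempty_Icc.mpr zero_le_one).image _
      obtain ⟨t₀, ht₀, hts⟩ := hcpt.sSup_mem hne
      have : γ.extend t₀ ∈ U := by
        rw [γ.extend_apply ht₀]
        exact hmemU _
      have hlt' : E (γ.extend t₀) < c := by
        by_contra h
        exact this ⟨trivial, not_lt.mp h⟩
      exact absurd (hcy.trans_eq hts.symm) (not_le.mpr hlt')
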